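/- Valid co-rank stays within tightened bounds: suppose j is a valid co-rank vector (Σ j_t = K, max ℓ(j) ≤ min r(j)) and i is a vector with Σ i_t = K that violates co-ranking with donor p, receiver q (L_p[i_p−1] > L_q[i_q]), where all values are distinct. Then j_p ≤ i_p − 1 < i_p and j_q ≥ i_q + 1 > i_q; hence setting U_b[p] ← i_p and L_b[q] ← i_q keeps j within the bounds. -/
import Mathlib


open scoped BigOperators Classical

/-- Left boundary value `ℓ_t` of the cut: `L_t[i_t - 1]` if `i_t > 0`, else `⊥` (−∞). -/
noncomputable def lcut {m : ℕ} (n : Fin m → ℕ) (L : ∀ t, Fin (n t) → ℝ)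
    (i : Fin m → ℕ) (t : Fin m) : EReal :=
  if h : 0 < i t ∧ i t ≤ n t then ((L t ⟨i t - 1, by omega⟩ : ℝ) : EReal) else ⊥

/-- Right boundary value `r_t` of the cut: `L_t[i_t]` if `i_t < n_t`, else `⊤` (+∞). -/
noncomputable def rcut {m : ℕ} (n : Fin m → ℕ) (L : ∀ t, Fin (n t) → ℝ)
    (i : Fin m → ℕ) (t : Fin m) : EReal :=
  if h : i t < n t then ((L t ⟨i t, h⟩ : ℝ) : EReal) else ⊤

/-- a valid co-rank vector `j` stays within the tightened bounds:
`j_p < i_p` and `j_q > i_q` for the violated donor/receiver pair of `i`. -/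
theorem valid_corank_within_tightened_bounds {m : ℕ} (n : Fin m → ℕ)
    (L : ∀ t, Fin (n t) → ℝ) (hmono : ∀ t, Monotone (L t))
    (hinj : Function.Injective (fun x : Σ t : Fin m, Fin (n t) => L x.1 x.2))
    (K : ℕ) (i j : Fin m → ℕ)
    (hile : ∀ t, i t ≤ n t) (hjle : ∀ t, j t ≤ n t)
    (hisum : ∑ t, i t = K) (hjsum : ∑ t, j t = K)
    (hjco : (⨆ t, lcut n L j t) ≤ ⨅ t, rcut n L j t)
    (p q : Fin m) (hpq : p ≠ q)
    (hpmax : ∀ t, lcut n L i t ≤ lcut n L i p)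
    (hqmin : ∀ t, rcut n L i q ≤ rcut n L i t)
    (hp : 0 < i p) (hq : i q < n q)
    (hviol : L q ⟨i q, hq⟩ < L p ⟨i p - 1, by have := hile p; omega⟩) :
    j p < i p ∧ i q < j q := by
  classical
  -- distinct values across different sequences
  have hne : ∀ (s t : Fin m) (a : Fin (n s)) (b : Fin (n t)), s ≠ t → L s a ≠ L t b := by
    intro s t a b hst h
    exact hst (congrArg Sigma.fst (hinj (show (fun x : Σ t : Fin m, Fin (n t) => L x.1 x.2)
      ⟨s, a⟩ = (fun x : Σ t : Fin m, Fin (n t) => L x.1 x.2) ⟨t, b⟩ from h)))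
  have hkey : ∀ s t, lcut n L j s ≤ rcut n L j t := fun s t =>
    le_trans (le_iSup _ s) (hjco.trans (iInf_le _ t))
  set x : ℝ := L p ⟨i p - 1, by have := hile p; omega⟩ with hx
  set y : ℝ := L q ⟨i q, hq⟩ with hy
  have hip := hile p
  have hiq := hile q
  have hjpn := hjle p
  have hjqn := hjle q
  have hlip : lcut n L i p = (x : EReal) := by rw [lcut, dif_pos ⟨hp, hile p⟩]
  have hriq : rcut n L i q = (y : EReal) := by rw [rcut, dif_pos hq]
  -- final contradiction once j p = i p and j q = i q
  have hfinal : j p = i p → j q = i q → False := by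
    intro hjp hjq
    have h1 : lcut n L j p = (x : EReal) := by
      rw [lcut, dif_pos (by omega : 0 < j p ∧ j p ≤ n p)]
      norm_cast
      congr 1
      simp only [Fin.mk.injEq]
      omega
    have h2 : rcut n L j q = (y : EReal) := by
      rw [rcut, dif_pos (by omega : j q < n q)]
      norm_cast
      congr 1
      simp only [Fin.mk.injEq]
      omega
    have := hkey p q
    rw [h1, h2, EReal.coe_le_coe_iff] at this
    exact absurd hviol (not_lt.mpr this)
  constructor
  · -- j p < i p
    by_contra hcon
    push_neg at hcon
    have hall : ∀ t, i t ≤ j t := by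
      intro t
      by_contra ht
      push_neg at ht
      by_cases htp : t = p
      · subst htp; omega
      · have hit : 0 < i t := by omega
        have hjt : j t < n t := lt_of_lt_of_le ht (hile t)
        have hitn := hile t
        have hjtn := hjle t
        have hljp : (x : EReal) ≤ lcut n L j p := by
          rw [lcut, dif_pos (by omega : 0 < j p ∧ j p ≤ n p)]
          have hle : (⟨i p - 1, by omega⟩ : Fin (n p)) ≤ ⟨j p - 1, by omega⟩ := by
            simp only [Fin.mk_le_mk]; omega
          exact_mod_cast hmono p hle
        have hrjt : rcut n L j t = ((L t ⟨j t, hjt⟩ : ℝ) : EReal) := by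
          rw [rcut, dif_pos hjt]
        have hlit : lcut n L i t = ((L t ⟨i t - 1, by have := hile t; omega⟩ : ℝ) : EReal) := by
          rw [lcut, dif_pos ⟨hit, hile t⟩]
        have h1 : L t ⟨i t - 1, by have := hile t; omega⟩ < x := by
          have := hpmax t
          rw [hlit, hlip, EReal.coe_le_coe_iff] at this
          exact lt_of_le_of_ne this (hne t p _ _ htp)
        have h2 : (x : EReal) ≤ ((L t ⟨j t, hjt⟩ : ℝ) : EReal) :=
          le_trans hljp (by rw [← hrjt]; exact hkey p t)
        rw [EReal.coe_le_coe_iff] at h2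
        have h3 : L t ⟨j t, hjt⟩ ≤ L t ⟨i t - 1, by have := hile t; omega⟩ :=
          hmono t (by simp only [Fin.mk_le_mk]; omega)
        linarith
    have heq : ∀ t ∈ Finset.univ, i t = j t := by
      rw [← Finset.sum_eq_sum_iff_of_le (fun t _ => hall t)]
      rw [hisum, hjsum]
    exact hfinal ((heq p (Finset.mem_univ p)).symm) ((heq q (Finset.mem_univ q)).symm)
  · -- i q < j q
    by_contra hcon
    push_neg at hcon
    have hall : ∀ t, j t ≤ i t := by
      intro t
      by_contra ht
      push_neg at ht
      by_cases htq : t = q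
      · subst htq; omega
      · have hit : i t < n t := lt_of_lt_of_le ht (hjle t)
        have hitn := hile t
        have hjtn := hjle t
        have hrjq : rcut n L j q ≤ (y : EReal) := by
          rw [rcut, dif_pos (by omega : j q < n q)]
          have hle : (⟨j q, by omega⟩ : Fin (n q)) ≤ ⟨i q, hq⟩ := by
            simp only [Fin.mk_le_mk]; omega
          exact_mod_cast hmono q hle
        have hljt : lcut n L j t = ((L t ⟨j t - 1, by have := hjle t; omega⟩ : ℝ) : EReal) := by
          rw [lcut, dif_pos ⟨by omega, hjle t⟩]
        have hrit : rcut n L i t = ((L t ⟨i t, hit⟩ : ℝ) : EReal) := by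
          rw [rcut, dif_pos hit]
        have h1 : y < L t ⟨i t, hit⟩ := by
          have := hqmin t
          rw [hrit, hriq, EReal.coe_le_coe_iff] at this
          exact lt_of_le_of_ne this (Ne.symm (hne t q _ _ htq))
        have h2 : ((L t ⟨j t - 1, by have := hjle t; omega⟩ : ℝ) : EReal) ≤ (y : EReal) :=
          le_trans (by rw [← hljt]; exact hkey t q) hrjq
        rw [EReal.coe_le_coe_iff] at h2
        have h3 : L t ⟨i t, hit⟩ ≤ L t ⟨j t - 1, by have := hjle t; omega⟩ :=
          hmono t (by simp only [Fin.mk_le_mk]; omega)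
        linarith
    have heq : ∀ t ∈ Finset.univ, j t = i t := by
      rw [← Finset.sum_eq_sum_iff_of_le (fun t _ => hall t)]
      rw [hisum, hjsum]
    exact hfinal (heq p (Finset.mem_univ p)) (heq q (Finset.mem_univ q))
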